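/- For every word x of length n over a finite alphabet, there exists an NFA with at most ⌊n/2⌋ + 1 states that accepts x and has exactly one accepting path of length n (so accepts no other word of length n). -/

import Mathlib

/-- `IsAccPath M n v s` says that `s` is an accepting path of length `n` in the
NFA `M` (no ε-transitions) spelling the word `v`: it starts in a start state,
ends in an accepting state, and each step follows a transition labeled by the
corresponding letter of `v`. -/
def IsAccPath {α σ : Type*} (M : NFA α σ) (n : ℕ) (v : List α)
    (s : Fin (n + 1) → σ) : Prop :=
  ∃ h : v.length = n,
    s 0 ∈ M.start ∧ s (Fin.last n) ∈ M.accept ∧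
    ∀ i : Fin n, s i.succ ∈ M.step (s i.castSucc) (v.get (Fin.cast h.symm i))

/-- `UniquelyAccepts M w` says that `M` accepts `w` and there is exactly one
accepting path of length `|w|` over all words of length `|w|`; it spells `w`. -/
def UniquelyAccepts {α σ : Type*} (M : NFA α σ) (w : List α) : Prop :=
  (∃ s, IsAccPath M w.length w s) ∧
  (∀ (v : List α) (s : Fin (w.length + 1) → σ), IsAccPath M w.length v s → v = w) ∧
  (∀ s s' : Fin (w.length + 1) → σ,
    IsAccPath M w.length w s → IsAccPath M w.length w s' → s = s')

/-- One step of the "odd gadget": go up (below `k`), take the unique self-loop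
at the top `k`, or go down. -/
def RelO (k a b : ℕ) : Prop := (a < k ∧ b = a + 1) ∨ (a = k ∧ b = k) ∨ (b + 1 = a ∧ a ≤ k)

lemma steps_ub (p : ℕ → ℕ) : ∀ b a, a ≤ b → (∀ t, a ≤ t → t < b → p (t+1) ≤ p t + 1) →
    p b ≤ p a + (b - a) := by
  intro b
  induction b with
  | zero => intro a ha _; interval_cases a; simp
  | succ b ih =>
    intro a ha h
    rcases Nat.lt_or_ge a (b+1) with h1 | h1
    · have hb : a ≤ b := by omega
      have h2 := ih a hb (fun t ht1 ht2 => h t ht1 (by omega))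
      have h3 := h b hb (by omega)
      omega
    · have : a = b + 1 := by omega
      subst this; simp

lemma steps_lb (p : ℕ → ℕ) : ∀ b a, a ≤ b → (∀ t, a ≤ t → t < b → p t ≤ p (t+1) + 1) →
    p a ≤ p b + (b - a) := by
  intro b
  induction b with
  | zero => intro a ha _; interval_cases a; simp
  | succ b ih =>
    intro a ha h
    rcases Nat.lt_or_ge a (b+1) with h1 | h1
    · have hb : a ≤ b := by omega
      have h2 := ih a hb (fun t ht1 ht2 => h t ht1 (by omega))
      have h3 := h b hb (by omega)
      omega
    · have : a = b + 1 := by omega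
      subst this; simp

lemma steps_parity (p : ℕ → ℕ) :
    ∀ b, (∀ t, t < b → (p (t+1) = p t + 1 ∨ p (t+1) + 1 = p t)) →
    (p b + b) % 2 = p 0 % 2 := by
  intro b
  induction b with
  | zero => simp
  | succ b ih =>
    intro h
    have h1 := ih (fun t ht => h t (by omega))
    have h2 := h b (by omega)
    omega

/-- Core uniqueness: any `RelO`-walk of length `2k+1` from `0` to `0` is the spine
`t ↦ min t (2k+1 - t)` (up, one self-loop at the top, down). -/
lemma relO_core (k : ℕ) (p : ℕ → ℕ) (h0 : p 0 = 0) (hn : p (2*k+1) = 0)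
    (hs : ∀ t, t < 2*k+1 → RelO k (p t) (p (t+1))) :
    ∀ t, t ≤ 2*k+1 → p t = min t (2*k+1 - t) := by
  have stepUB : ∀ t, t < 2*k+1 → p (t+1) ≤ p t + 1 := by
    intro t ht; rcases hs t ht with h | h | h <;> omega
  have stepLB : ∀ t, t < 2*k+1 → p t ≤ p (t+1) + 1 := by
    intro t ht; rcases hs t ht with h | h | h <;> omega
  have ub1 : ∀ t, t ≤ 2*k+1 → p t ≤ t := by
    intro t ht
    have := steps_ub p t 0 (by omega) (fun u hu1 hu2 => stepUB u (by omega))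
    omega
  have ub2 : ∀ t, t ≤ 2*k+1 → p t ≤ 2*k+1 - t := by
    intro t ht
    have := steps_lb p (2*k+1) t ht (fun u hu1 hu2 => stepLB u hu2)
    omega
  have hloop : ∃ τ, τ < 2*k+1 ∧ p τ = k ∧ p (τ+1) = k := by
    by_contra hc
    push_neg at hc
    have hpm : ∀ t, t < 2*k+1 → (p (t+1) = p t + 1 ∨ p (t+1) + 1 = p t) := by
      intro t ht
      rcases hs t ht with h | h | h
      · left; omega
      · exact absurd h.2 (hc t ht h.1)
      · right; omega
    have := steps_parity p (2*k+1) hpm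
    omega
  obtain ⟨τ, hτn, hτ1, hτ2⟩ := hloop
  have e1 : k ≤ τ := by have := ub1 τ (by omega); omega
  have e2 : τ ≤ k := by have := ub2 (τ+1) (by omega); omega
  have hτ : τ = k := by omega
  rw [hτ] at hτ1 hτ2
  intro t ht
  rcases le_or_gt t k with h | h
  · have h1 := steps_ub p k t h (fun u hu1 hu2 => stepUB u (by omega))
    have h2 := ub1 t (by omega)
    omega
  · have h1 := steps_lb p t (k+1) (by omega) (fun u hu1 hu2 => stepLB u (by omega))
    have h2 := ub2 t ht
    omega

lemma relO_spine (k u n : ℕ) (hn : n = 2*k+1) (hu : u < n) :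
    RelO k (min u (n - u)) (min (u+1) (n - (u+1))) := by
  unfold RelO
  omega

/-- Generic construction: from a "spine" `f` whose length-`|x|` walk from `f 0` to
`f |x|` is unique and whose consecutive-pair map is injective, build an NFA on
`Fin (k+1)` uniquely accepting `x`. -/
lemma build_nfa {α : Type*} (x : List α) (k : ℕ) (f : ℕ → ℕ)
    (hb : ∀ t, t ≤ x.length → f t ≤ k)
    (huniq : ∀ p : ℕ → ℕ, p 0 = f 0 → p x.length = f x.length →
      (∀ t, t < x.length → ∃ u, u < x.length ∧ p t = f u ∧ p (t+1) = f (u+1)) →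
      ∀ t, t ≤ x.length → p t = f t)
    (hinj : ∀ u u', u < x.length → u' < x.length → f u = f u' → f (u+1) = f (u'+1) →
      u = u') :
    ∃ M : NFA α (Fin (k+1)), UniquelyAccepts M x := by
  set n := x.length with hn
  set F : ℕ → Fin (k+1) := fun t => ⟨min (f t) k, by omega⟩ with hF
  have hFval : ∀ t, t ≤ n → (F t : ℕ) = f t := by
    intro t ht
    have := hb t ht
    simp [hF]
    omega
  set M : NFA α (Fin (k+1)) :=
    { step := fun p a =>
        { q | ∃ u : ℕ, ∃ hu : u < n, (p : ℕ) = f u ∧ (q : ℕ) = f (u+1) ∧ x.get ⟨u, hu⟩ = a },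
      start := {F 0},
      accept := {F n} } with hM
  -- any accepting path runs along the spine
  have key : ∀ (v : List α) (s : Fin (n + 1) → Fin (k+1)), IsAccPath M n v s →
      (∀ i : Fin (n+1), s i = F (i : ℕ)) ∧ v = x := by
    intro v s hpath
    obtain ⟨hv, hstart, haccept, hstep⟩ := hpath
    set p : ℕ → ℕ := fun t => if h : t < n + 1 then (s ⟨t, h⟩ : ℕ) else f t with hp
    have pval : ∀ t (h : t < n+1), p t = (s ⟨t, h⟩ : ℕ) := by
      intro t h; simp only [hp]; exact dif_pos h
    have hp0 : p 0 = f 0 := by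
      have h1 : s 0 ∈ ({F 0} : Set (Fin (k+1))) := hstart
      simp only [Set.mem_singleton_iff] at h1
      rw [pval 0 (by omega)]
      have e : (⟨0, by omega⟩ : Fin (n+1)) = 0 := rfl
      rw [e, h1, hFval 0 (by omega)]
    have hpn : p n = f n := by
      have h1 : s (Fin.last n) ∈ ({F n} : Set (Fin (k+1))) := haccept
      simp only [Set.mem_singleton_iff] at h1
      rw [pval n (by omega)]
      have e : (⟨n, by omega⟩ : Fin (n+1)) = Fin.last n := rfl
      rw [e, h1, hFval n (by omega)]
    have hpstep : ∀ t, t < n → ∃ u, u < n ∧ p t = f u ∧ p (t+1) = f (u+1) := by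
      intro t ht
      obtain ⟨u, hu, h1, h2, _⟩ := hstep ⟨t, ht⟩
      refine ⟨u, hu, ?_, ?_⟩
      · rw [pval t (by omega)]; exact h1
      · rw [pval (t+1) (by omega)]; exact h2
    have heq := huniq p hp0 hpn hpstep
    constructor
    · intro i
      apply Fin.val_injective
      have h3 : s i = s ⟨(i : ℕ), i.isLt⟩ := rfl
      rw [h3, hFval i (by omega), ← pval (i : ℕ) i.isLt]
      exact heq i (by omega)
    · apply List.ext_get (by omega)
      intro i h1 h2
      obtain ⟨u, hu, hh1, hh2, hlet⟩ := hstep ⟨i, by omega⟩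
      have q1 : p i = f u := by rw [pval i (by omega)]; exact hh1
      have q2 : p (i+1) = f (u+1) := by rw [pval (i+1) (by omega)]; exact hh2
      have hui : u = i := by
        apply hinj u i hu (by omega)
        · rw [← q1, heq i (by omega)]
        · rw [← q2, heq (i+1) (by omega)]
      subst hui
      exact hlet.symm
  refine ⟨M, ?_, ?_, ?_⟩
  · -- existence of an accepting path
    refine ⟨fun i => F i, hn.symm, ?_, ?_, ?_⟩
    · show F ((0 : Fin (n+1)) : ℕ) ∈ ({F 0} : Set (Fin (k+1)))
      simp
    · show F ((Fin.last n : Fin (n+1)) : ℕ) ∈ ({F n} : Set (Fin (k+1)))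
      simp [Fin.last]
    · intro i
      refine ⟨(i : ℕ), i.isLt, ?_, ?_, ?_⟩
      · show (F ((i.castSucc : Fin (n+1)) : ℕ) : ℕ) = f (i : ℕ)
        rw [Fin.coe_castSucc]
        exact hFval i (by omega)
      · show (F ((i.succ : Fin (n+1)) : ℕ) : ℕ) = f ((i : ℕ) + 1)
        rw [Fin.val_succ]
        exact hFval ((i : ℕ)+1) (by omega)
      · apply congrArg
        apply Fin.val_injective
        simp
  · intro v s hpath
    exact (key v s hpath).2
  · intro s s' h1 h2
    funext i
    rw [(key x s h1).1 i, (key x s' h2).1 i]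

theorem stmt_17 {α : Type*} (x : List α) :
    ∃ (m : ℕ), m ≤ x.length / 2 + 1 ∧ ∃ M : NFA α (Fin m), UniquelyAccepts M x := by
  set n := x.length with hn
  rcases Nat.even_or_odd n with ⟨k, hk⟩ | ⟨k, hk⟩
  · rcases Nat.eq_zero_or_pos k with hk0 | hk0
    · -- n = 0
      refine ⟨1, by omega, ?_⟩
      apply build_nfa x 0 (fun _ => 0)
      · intro t _; exact le_refl 0
      · intro p h0 _ _ t ht
        have : t = 0 := by omega
        rw [this, h0]
      · intro u u' hu _ _ _
        omega
    · -- n = 2k, k ≥ 1 : odd gadget for k-1 on [0, n-1], plus a final fresh state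
      refine ⟨k + 1, by omega, ?_⟩
      set f : ℕ → ℕ := fun t => if t = n then k else min t (n - 1 - t) with hf
      have fval : ∀ t, t ≠ n → f t = min t (n - 1 - t) := by
        intro t ht; simp [hf, ht]
      have fn : f n = k := by simp [hf]
      have fsmall : ∀ u, u < n → f u ≤ k - 1 := by
        intro u hu
        rw [fval u (by omega)]
        omega
      apply build_nfa x k f
      · intro t ht
        rcases eq_or_ne t n with h | h
        · rw [h, fn]
        · rw [fval t h]; omega
      · intro p hp0 hpn hstep t ht
        rw [fval 0 (by omega)] at hp0
        rw [fn] at hpn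
        have pbound : ∀ t, t < n → p t ≤ k - 1 := by
          intro t ht
          obtain ⟨u, hu, e1, _⟩ := hstep t ht
          rw [e1]
          exact fsmall u hu
        have pn1 : p (n - 1) = 0 := by
          obtain ⟨u, hu, e1, e2⟩ := hstep (n-1) (by omega)
          have en : n - 1 + 1 = n := by omega
          rw [en, hpn] at e2
          have hun : u + 1 = n := by
            by_contra hc
            have := fsmall (u+1) (by omega)
            omega
          have hu1 : u = n - 1 := by omega
          rw [e1, hu1, fval (n-1) (by omega)]
          omega
        have hrel : ∀ t, t < 2*(k-1)+1 → RelO (k-1) (p t) (p (t+1)) := by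
          intro t ht
          obtain ⟨u, hu, e1, e2⟩ := hstep t (by omega)
          have h2 : p (t+1) ≤ k - 1 := pbound (t+1) (by omega)
          have hun : u + 1 ≠ n := by
            intro hc
            rw [e2, hc, fn] at h2
            omega
          have hu1 : u < n - 1 := by omega
          rw [e1, e2, fval u (by omega), fval (u+1) hun]
          have e3 : n - 1 - (u + 1) = (n-1) - (u+1) := rfl
          have := relO_spine (k-1) u (n-1) (by omega) (by omega)
          convert this using 2 <;> omega
        have hcore := relO_core (k-1) p (by omega) (by rw [show 2*(k-1)+1 = n - 1 by omega]; exact pn1) hrel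
        rcases eq_or_ne t n with h | h
        · rw [h, hpn, fn]
        · rw [fval t h]
          have := hcore t (by omega)
          omega
      · intro u u' hu hu' e1 e2
        rcases eq_or_ne (u+1) n with h1 | h1 <;> rcases eq_or_ne (u'+1) n with h2 | h2
        · omega
        · rw [h1, fn] at e2
          rw [fval (u'+1) h2] at e2
          have := fsmall u' hu'
          omega
        · rw [h2, fn] at e2
          rw [fval (u+1) h1] at e2
          omega
        · rw [fval u (by omega), fval u' (by omega)] at e1
          rw [fval (u+1) h1, fval (u'+1) h2] at e2
          omega
  · -- n = 2k+1 : the pure odd gadget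
    refine ⟨k + 1, by omega, ?_⟩
    apply build_nfa x k (fun t => min t (n - t))
    · intro t ht; omega
    · intro p hp0 hpn hstep t ht
      have h0 : p 0 = 0 := by simpa using hp0
      have hN : p (2*k+1) = 0 := by
        rw [← hk] at *
        rw [hpn]; simp [hn]
      have hrel : ∀ t, t < 2*k+1 → RelO k (p t) (p (t+1)) := by
        intro t ht
        obtain ⟨u, hu, e1, e2⟩ := hstep t (by omega)
        rw [e1, e2]
        exact relO_spine k u n hk (by omega)
      have := relO_core k p h0 hN hrel t (by omega)
      rw [this]
      omega
    · intro u u' hu hu' e1 e2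
      omega
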